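/- arXiv:1609.07183 — 3 statements merged into one kernel-verified Lean document; each statement's English description precedes it below -/
import Mathlib

section
/- Let q be a prime power, k > 1, Δ = (q^k − 1)/(q − 1), γ a primitive element of F_{q^k}, and for an integer a let h_a(x) ∈ F_q[x] be the minimal polynomial of γ^{−a} over F_q. Then the number of distinct polynomials of the form h_{Δe₁}(x)·h_{e₂}(x), where e₁ and e₂ range over all integers satisfying gcd(q − 1, k·e₁ − e₂) = 1 and gcd(Δ, e₂) = 1, equals φ(q^k − 1)·(q − 1)/k, where φ is the Euler totient function. (Equivalently, this is the number of distinct cyclic codes C_{(Δe₁, e₂)} of length q^k − 1 and dimension k + 1 satisfying the two conditions.) -/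
open Polynomial

lemma my_gcd_congr (m a b : ℤ) (h : m ∣ a - b) : Int.gcd m a = Int.gcd m b := by
  have key : ∀ x y : ℤ, m ∣ x - y → (Int.gcd m x : ℤ) ∣ (Int.gcd m y : ℤ) := by
    intro x y hxy
    apply Int.dvd_coe_gcd (Int.gcd_dvd_left _ _)
    have h1 : (Int.gcd m x : ℤ) ∣ x - y := dvd_trans (Int.gcd_dvd_left _ _) hxy
    have h2 : (Int.gcd m x : ℤ) ∣ x := Int.gcd_dvd_right _ _
    simpa using dvd_sub h2 h1
  exact Nat.dvd_antisymm (Int.natCast_dvd_natCast.mp (key a b h))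
    (Int.natCast_dvd_natCast.mp (key b a (by rw [← neg_sub a b]; exact dvd_neg.mpr h)))

lemma my_gcd_congr' (a b M : ℤ) (h : M ∣ a - b) : Int.gcd a M = Int.gcd b M := by
  rw [Int.gcd_comm, my_gcd_congr M a b h, Int.gcd_comm]

lemma my_gcd_mul (x : ℤ) (a b : ℕ) :
    Int.gcd x (a * b) = 1 ↔ Int.gcd x a = 1 ∧ Int.gcd x b = 1 := by
  rw [Int.gcd_def, Int.gcd_def, Int.gcd_def]
  simp only [Int.natAbs_natCast, Int.natAbs_mul]
  exact Nat.coprime_mul_iff_right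

lemma my_isUnit_intCast {n : ℕ} [NeZero n] (x : ℤ) :
    IsUnit ((x : ZMod n)) ↔ Int.gcd x n = 1 := by
  have h1 : ((x : ZMod n)) = (((x : ZMod n).val : ℕ) : ZMod n) :=
    (ZMod.natCast_rightInverse (x : ZMod n)).symm
  have h2 : (n : ℤ) ∣ x - ((x : ZMod n).val : ℤ) := by
    rw [← ZMod.intCast_zmod_eq_zero_iff_dvd]
    push_cast
    rw [← h1]
    ring
  have h3 : Int.gcd x n = Nat.gcd ((x : ZMod n).val) n := by
    rw [Int.gcd_comm, my_gcd_congr (n:ℤ) x ((x : ZMod n).val) h2, Int.gcd_natCast_natCast,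
      Nat.gcd_comm]
  rw [h1, ZMod.isUnit_iff_coprime, h3]

lemma my_val_congr {M : ℕ} [NeZero M] (w : ZMod M) (e : ℤ) (he : (e : ZMod M) = w) :
    (M : ℤ) ∣ e - (w.val : ℤ) := by
  rw [← ZMod.intCast_zmod_eq_zero_iff_dvd]
  push_cast
  rw [he, ZMod.natCast_rightInverse w, sub_self]

lemma my_root_mem {E : Type*} [Field E] [DecidableEq E] {p : Polynomial E}
    (hp : p ≠ 0) {s : Finset E} (hs : s.card = p.natDegree)
    (hroots : ∀ x ∈ s, p.IsRoot x) {y : E} (hy : p.IsRoot y) : y ∈ s := by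
  have hsub : s ⊆ p.roots.toFinset := by
    intro x hx
    rw [Multiset.mem_toFinset, Polynomial.mem_roots hp]
    exact hroots x hx
  have hcard : p.roots.toFinset.card ≤ s.card := by
    calc p.roots.toFinset.card ≤ Multiset.card p.roots := p.roots.toFinset_card_le
      _ ≤ p.natDegree := p.card_roots'
      _ = s.card := hs.symm
  have heq := Finset.eq_of_subset_of_card_le hsub hcard
  rw [heq, Multiset.mem_toFinset, Polynomial.mem_roots hp]
  exact hy

lemma my_mem_range {F E : Type*} [Field F] [Fintype F] [Field E] [Fintype E] [Algebra F E]
    [DecidableEq E] {x : E} (hx : x ^ Fintype.card F = x) :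
    ∃ a : F, algebraMap F E a = x := by
  set q := Fintype.card F with hq
  have hq2 : 1 < q := Fintype.one_lt_card
  set p : Polynomial E := X ^ q - X with hpdef
  have hpd : p.natDegree = q := FiniteField.X_pow_card_sub_X_natDegree_eq E hq2
  have hpne : p ≠ 0 := FiniteField.X_pow_card_sub_X_ne_zero E hq2
  set s : Finset E := Finset.univ.image (algebraMap F E) with hs
  have hscard : s.card = q := by
    rw [hs, Finset.card_image_of_injective _ (algebraMap F E).injective, Finset.card_univ]
  have hroots : ∀ z ∈ s, p.IsRoot z := by
    intro z hz
    rw [hs, Finset.mem_image] at hz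
    obtain ⟨a, _, rfl⟩ := hz
    simp only [Polynomial.IsRoot, hpdef, Polynomial.eval_sub, Polynomial.eval_pow,
      Polynomial.eval_X]
    rw [← map_pow, FiniteField.pow_card, sub_self]
  have hyroot : p.IsRoot x := by
    simp only [Polynomial.IsRoot, hpdef, Polynomial.eval_sub, Polynomial.eval_pow,
      Polynomial.eval_X, hx, sub_self]
  have := my_root_mem hpne (hscard.trans hpd.symm) hroots hyroot
  rw [hs, Finset.mem_image] at this
  obtain ⟨a, _, ha⟩ := this
  exact ⟨a, ha⟩

lemma my_frobenius (F E : Type*) [Field F] [Fintype F] [Field E] [Fintype E] [Algebra F E] :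
    ∃ φ : E →ₐ[F] E, ∀ x, φ x = x ^ Fintype.card F := by
  set p := ringChar F with hp
  haveI : CharP F p := ringChar.charP F
  haveI hpp : Fact p.Prime := ⟨CharP.char_is_prime F p⟩
  obtain ⟨s, -, hcard⟩ := FiniteField.card F p
  haveI : CharP E p := charP_of_injective_algebraMap (algebraMap F E).injective p
  haveI : ExpChar E p := ExpChar.prime hpp.out
  refine ⟨{ toRingHom := iterateFrobenius E p s, commutes' := ?_ }, ?_⟩
  · intro a
    show iterateFrobenius E p s ((algebraMap F E) a) = (algebraMap F E) a
    rw [iterateFrobenius_def, ← map_pow, ← hcard, FiniteField.pow_card]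
  · intro x
    show iterateFrobenius E p s x = x ^ Fintype.card F
    rw [iterateFrobenius_def, hcard]

set_option maxHeartbeats 1000000 in
/-- The number of distinct parity-check polynomials `h_{Δe₁}(x)·h_{e₂}(x)`, where
`e₁, e₂` range over the integers with `gcd(q − 1, k·e₁ − e₂) = 1` and `gcd(Δ, e₂) = 1`,
equals `φ(q^k − 1)·(q − 1)/k` (Theorem 5 of the paper). -/
theorem count_parity_check_polynomials
    (q k : ℕ) (hk : 1 < k)
    (F E : Type*) [Field F] [Fintype F] [Field E] [Fintype E] [Algebra F E]
    (hcard : Fintype.card F = q) (hE : Fintype.card E = q ^ k)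
    (γ : Eˣ) (hγ : ∀ x : Eˣ, x ∈ Subgroup.zpowers γ)
    (Δ : ℤ) (hΔ : Δ * ((q : ℤ) - 1) = (q : ℤ) ^ k - 1) :
    {h : Polynomial F | ∃ e₁ e₂ : ℤ,
        Int.gcd ((q : ℤ) - 1) ((k : ℤ) * e₁ - e₂) = 1 ∧ Int.gcd Δ e₂ = 1 ∧
        h = minpoly F ((γ ^ (-(Δ * e₁)) : Eˣ) : E) * minpoly F ((γ ^ (-e₂) : Eˣ) : E)}.ncard
      * k = Nat.totient (q ^ k - 1) * (q - 1) := by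
  classical
  -- numerology
  have hq2 : 2 ≤ q := by rw [← hcard]; exact Fintype.one_lt_card
  have hqk2 : 2 ≤ q ^ k := le_trans hq2 (Nat.le_self_pow (by omega) q)
  set n : ℕ := q ^ k - 1 with hn
  have hn1 : 1 ≤ n := by omega
  have hnq : (n : ℤ) = (q : ℤ) ^ k - 1 := by
    rw [hn, Nat.cast_sub (by omega : 1 ≤ q ^ k), Nat.cast_pow, Nat.cast_one]
  have hq2' : (2 : ℤ) ≤ (q : ℤ) := by exact_mod_cast hq2
  have hqk2' : (2 : ℤ) ≤ (q : ℤ) ^ k := by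
    calc (2:ℤ) ≤ (q:ℤ) := hq2'
      _ ≤ (q:ℤ) ^ k := le_self_pow₀ (by linarith) (by omega)
  have hΔpos : 0 < Δ := by nlinarith [hΔ]
  set D : ℕ := Δ.toNat with hDdef
  have hDcast : (D : ℤ) = Δ := Int.toNat_of_nonneg hΔpos.le
  set m : ℕ := q - 1 with hm
  have hmc : (m : ℤ) = (q : ℤ) - 1 := by rw [hm, Nat.cast_sub (by omega : 1 ≤ q), Nat.cast_one]
  have hm1 : 1 ≤ m := by omega
  have hDm : D * m = n := by
    have h0 : (D : ℤ) * (m : ℤ) = (n : ℤ) := by rw [hDcast, hmc, hnq]; exact hΔ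
    exact_mod_cast h0
  have hD1 : 0 < D := by
    rcases Nat.eq_zero_or_pos D with h | h
    · rw [h, zero_mul] at hDm; omega
    · exact h
  haveI : NeZero n := ⟨by omega⟩
  haveI : NeZero m := ⟨by omega⟩
  have hnDm : (n : ℤ) = (D : ℤ) * (m : ℤ) := by exact_mod_cast hDm.symm
  have hmn : (m : ℤ) ∣ (n : ℤ) := ⟨D, by rw [hnDm]; ring⟩
  have hDn : (D : ℤ) ∣ (n : ℤ) := ⟨m, by rw [hnDm]⟩
  -- geometric sum facts
  have hgeom : Δ = ∑ i ∈ Finset.range k, (q : ℤ) ^ i := by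
    have h2 := geom_sum_mul (q : ℤ) k
    have hne : (q : ℤ) - 1 ≠ 0 := by linarith
    exact mul_right_cancel₀ hne (hΔ.trans h2.symm)
  have hdvdpow : ∀ j : ℕ, (m : ℤ) ∣ (q : ℤ) ^ j - 1 := by
    intro j
    rw [hmc]
    exact ⟨∑ i ∈ Finset.range j, (q : ℤ) ^ i, by rw [← geom_sum_mul]; ring⟩
  have hmDk : (m : ℤ) ∣ (D : ℤ) - (k : ℤ) := by
    rw [hDcast, hgeom]
    have hsplit : (∑ i ∈ Finset.range k, (q : ℤ) ^ i) - (k : ℤ)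
        = ∑ i ∈ Finset.range k, ((q : ℤ) ^ i - 1) := by
      rw [Finset.sum_sub_distrib, Finset.sum_const, Finset.card_range]
      push_cast; ring
    rw [hsplit]
    exact Finset.dvd_sum fun i _ => hdvdpow i
  have hDq : Nat.Coprime D q := by
    have h1 : Nat.Coprime D (q ^ k) := by
      have hqq : q ^ k = 1 + m * D := by
        have hmul : m * D = n := by rw [← hDm]; ring
        omega
      unfold Nat.Coprime
      rw [hqq, Nat.gcd_add_mul_right_right D 1 m, Nat.gcd_one_right]
    exact Nat.Coprime.coprime_dvd_right (dvd_pow_self q (by omega : k ≠ 0)) h1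
  -- group facts
  have hcardU : Fintype.card Eˣ = n := by rw [Fintype.card_units, hE]
  have hord : orderOf γ = n := by
    have h := orderOf_eq_card_of_forall_mem_zpowers hγ
    rw [Nat.card_eq_fintype_card, hcardU] at h
    exact h
  have hzpow : ∀ a b : ℤ, (n : ℤ) ∣ a - b → γ ^ a = γ ^ b := by
    intro a b hab
    have h1 : γ ^ (a - b) = 1 := by
      apply orderOf_dvd_iff_zpow_eq_one.mp
      rw [hord]; exact hab
    rw [zpow_sub] at h1
    exact mul_inv_eq_one.mp h1
  have hmodEq : ∀ a b : ℕ, γ ^ a = γ ^ b → (n : ℤ) ∣ (b : ℤ) - (a : ℤ) := by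
    intro a b hab
    have := (pow_eq_pow_iff_modEq.mp hab)
    rw [hord] at this
    exact this.dvd
  -- Frobenius facts
  obtain ⟨φ, hφ⟩ := my_frobenius F E
  have hφinj : Function.Injective φ := φ.toRingHom.injective
  have hstep : ∀ y : E, minpoly F (y ^ q) = minpoly F y := by
    intro y
    rw [← hcard, ← hφ y]
    exact minpoly.algHom_eq φ hφinj y
  have hminpow : ∀ (x : E) (j : ℕ), minpoly F (x ^ q ^ j) = minpoly F x := by
    intro x j
    induction j with
    | zero => simp
    | succ j ih => rw [pow_succ, pow_mul, hstep, ih]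
  have haroot : ∀ (x : E) (j : ℕ), (Polynomial.aeval (x ^ q ^ j)) (minpoly F x) = 0 := by
    intro x j
    rw [← hminpow x j]
    exact minpoly.aeval F _
  -- finite dimension
  have hfrk : Module.finrank F E = k := by
    have hc := Module.card_eq_pow_finrank (K := F) (V := E)
    rw [hcard, hE] at hc
    exact (Nat.pow_right_injective hq2 hc.symm)
  -- main per-v bundle
  have main : ∀ v : ℕ, Nat.Coprime D v →
      (∀ i j : ℕ, i < k → j < k →
        (((γ ^ v)⁻¹ : Eˣ) : E) ^ q ^ i = (((γ ^ v)⁻¹ : Eˣ) : E) ^ q ^ j → i = j) ∧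
      (minpoly F (((γ ^ v)⁻¹ : Eˣ) : E)).natDegree = k ∧
      (∀ y : E, Polynomial.aeval y (minpoly F (((γ ^ v)⁻¹ : Eˣ) : E)) = 0 →
        ∃ j, j < k ∧ y = (((γ ^ v)⁻¹ : Eˣ) : E) ^ q ^ j) := by
    intro v hv
    set x : Eˣ := (γ ^ v)⁻¹ with hx
    have hgd : Nat.gcd n v ∣ m := by
      have h1 : Nat.Coprime D (Nat.gcd n v) := hv.coprime_dvd_right (Nat.gcd_dvd_right n v)
      have h2 : Nat.gcd n v ∣ D * m := by rw [hDm]; exact Nat.gcd_dvd_left n v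
      exact Nat.Coprime.dvd_of_dvd_mul_left h1.symm h2
    have hordx : orderOf x = n / Nat.gcd n v := by
      rw [hx, orderOf_inv, orderOf_pow, hord]
    have hordge : D ≤ orderOf x := by
      rw [hordx]
      have hg1 : 0 < Nat.gcd n v := Nat.gcd_pos_of_pos_left v (by omega)
      have hgle : Nat.gcd n v ≤ m := Nat.le_of_dvd (by omega) hgd
      have hnm : n / m = D := Nat.div_eq_of_eq_mul_left (by omega) hDm.symm
      calc D = n / m := hnm.symm
        _ ≤ n / Nat.gcd n v := Nat.div_le_div_left hgle hg1
    have hDlb : q ^ (k - 1) ≤ D := by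
      by_contra hlt
      push_neg at hlt
      have hkk : k = (k - 1) + 1 := by omega
      have hqpow : (q : ℤ) ^ k = (q : ℤ) ^ (k - 1) * (q : ℤ) := by
        conv_lhs => rw [hkk]
        rw [pow_succ]
      have hA2 : (2 : ℤ) ≤ (q : ℤ) ^ (k - 1) := by
        calc (2:ℤ) ≤ (q:ℤ) := hq2'
          _ ≤ (q:ℤ) ^ (k - 1) := le_self_pow₀ (by linarith) (by omega)
      have hDlt : (D : ℤ) < (q : ℤ) ^ (k - 1) := by exact_mod_cast hlt
      have hDq' : (D : ℤ) * ((q : ℤ) - 1) = (q : ℤ) ^ (k - 1) * (q : ℤ) - 1 := by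
        rw [hDcast, hΔ, hqpow]
      nlinarith [mul_le_mul_of_nonneg_right (by linarith : (D:ℤ) ≤ (q:ℤ) ^ (k-1) - 1)
        (by linarith : (0:ℤ) ≤ (q:ℤ) - 1)]
    have hO1 : ∀ j : ℕ, 0 < j → j < k → ¬(x ^ q ^ j = x) := by
      intro j hj0 hjk heq
      have hq2j : 2 ≤ q ^ j := le_trans hq2 (Nat.le_self_pow (by omega) q)
      have h1 : x ^ (q ^ j - 1) = 1 := by
        have h2 : x ^ (q ^ j - 1) * x = x := by
          rw [← pow_succ]
          have h3 : q ^ j - 1 + 1 = q ^ j := by omega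
          rw [h3, heq]
        exact mul_right_cancel (by rw [one_mul]; exact h2)
      have h2 : orderOf x ∣ q ^ j - 1 := orderOf_dvd_of_pow_eq_one h1
      have h3 : orderOf x ≤ q ^ j - 1 := Nat.le_of_dvd (by omega) h2
      have h4 : q ^ j ≤ q ^ (k - 1) := Nat.pow_le_pow_right (by omega) (by omega)
      have h5 : D < q ^ (k - 1) :=
        lt_of_le_of_lt (le_trans hordge (le_trans h3 (Nat.sub_le_sub_right h4 1)))
          (Nat.sub_lt (by omega) one_pos)
      exact absurd hDlb (not_le.mpr h5)
    have hO2 : x ^ q ^ k = x := by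
      have h1 : x ^ n = 1 := by rw [← hcardU]; exact pow_card_eq_one
      have h2 : q ^ k = n + 1 := by omega
      rw [h2, pow_succ, h1, one_mul]
    have hP1' : ∀ i j : ℕ, i < j → j < k → x ^ q ^ i = x ^ q ^ j → False := by
      intro i j hij hjk heq
      have h1 : (x ^ q ^ i) ^ q ^ (k - j) = (x ^ q ^ j) ^ q ^ (k - j) := by rw [heq]
      rw [← pow_mul, ← pow_mul, ← pow_add, ← pow_add] at h1
      have h2 : j + (k - j) = k := by omega
      rw [h2, hO2] at h1
      exact hO1 (i + (k - j)) (by omega) (by omega) h1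
    have hP1 : ∀ i j : ℕ, i < k → j < k →
        ((x : Eˣ) : E) ^ q ^ i = ((x : Eˣ) : E) ^ q ^ j → i = j := by
      intro i j hi hj heq
      have hu : x ^ q ^ i = x ^ q ^ j := by
        apply Units.ext
        rw [Units.val_pow_eq_pow_val, Units.val_pow_eq_pow_val]
        exact heq
      rcases lt_trichotomy i j with h | h | h
      · exact absurd (hP1' i j h hj hu) (fun hc => hc)
      · exact h
      · exact absurd (hP1' j i h hi hu.symm) (fun hc => hc)
    have hint : IsIntegral F ((x : Eˣ) : E) := IsIntegral.of_finite F _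
    have hd_le : (minpoly F ((x : Eˣ) : E)).natDegree ≤ k := hfrk ▸ minpoly.natDegree_le _
    have hd_pos : 0 < (minpoly F ((x : Eˣ) : E)).natDegree := minpoly.natDegree_pos hint
    have hP2 : (minpoly F ((x : Eˣ) : E)).natDegree = k := by
      by_contra hne
      have hdk : (minpoly F ((x : Eˣ) : E)).natDegree < k := by omega
      set xE : E := ((x : Eˣ) : E) with hxE
      have hfr2 : Module.finrank F (IntermediateField.adjoin F {xE}) =
          (minpoly F xE).natDegree := IntermediateField.adjoin.finrank hint
      haveI : Fintype (IntermediateField.adjoin F {xE}) := Fintype.ofFinite _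
      have hcardK : Fintype.card (IntermediateField.adjoin F {xE})
          = q ^ (minpoly F xE).natDegree := by
        have hck := Module.card_eq_pow_finrank (K := F) (V := (IntermediateField.adjoin F {xE}))
        rw [hcard, hfr2] at hck
        exact hck
      have hxK : xE ∈ IntermediateField.adjoin F {xE} :=
        IntermediateField.mem_adjoin_simple_self F xE
      have hpow : xE ^ q ^ (minpoly F xE).natDegree = xE := by
        have h1 : (⟨xE, hxK⟩ : IntermediateField.adjoin F {xE}) ^ (q ^ (minpoly F xE).natDegree)
            = ⟨xE, hxK⟩ := by
          rw [← hcardK]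
          exact FiniteField.pow_card _
        have h2 := congrArg Subtype.val h1
        simpa using h2
      have hxu : x ^ q ^ (minpoly F xE).natDegree = x := by
        apply Units.ext
        rw [Units.val_pow_eq_pow_val]
        exact hpow
      exact hO1 _ hd_pos hdk hxu
    refine ⟨hP1, hP2, ?_⟩
    intro y hy
    set g : Polynomial E := (minpoly F ((x : Eˣ) : E)).map (algebraMap F E) with hg
    have hgne : g ≠ 0 := by
      rw [hg]
      exact (Polynomial.map_ne_zero_iff (algebraMap F E).injective).mpr (minpoly.ne_zero hint)
    have hgdeg : g.natDegree = k := by rw [hg, Polynomial.natDegree_map]; exact hP2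
    set s : Finset E := (Finset.range k).image (fun j => ((x : Eˣ) : E) ^ q ^ j) with hs
    have hscard : s.card = k := by
      rw [hs, Finset.card_image_of_injOn, Finset.card_range]
      intro i hi j hj hij
      exact hP1 i j (Finset.mem_range.mp hi) (Finset.mem_range.mp hj) hij
    have hroots : ∀ z ∈ s, g.IsRoot z := by
      intro z hz
      rw [hs, Finset.mem_image] at hz
      obtain ⟨j, _, rfl⟩ := hz
      rw [Polynomial.IsRoot, hg, Polynomial.eval_map, ← Polynomial.aeval_def]
      exact haroot _ j
    have hyroot : g.IsRoot y := by
      rw [Polynomial.IsRoot, hg, Polynomial.eval_map, ← Polynomial.aeval_def]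
      exact hy
    have hmem := my_root_mem hgne (by rw [hscard, hgdeg]) hroots hyroot
    rw [hs, Finset.mem_image] at hmem
    obtain ⟨j, hj, hje⟩ := hmem
    exact ⟨j, Finset.mem_range.mp hj, hje.symm⟩
  -- linear factor
  have hlin : ∀ u : ℕ, ∃ a : F, algebraMap F E a = (((γ ^ (u * D))⁻¹ : Eˣ) : E) := by
    intro u
    apply my_mem_range
    rw [hcard]
    have h2 : (γ ^ (u * D) : Eˣ) ^ m = 1 := by
      rw [← pow_mul]
      have h3 : u * D * m = n * u := by rw [mul_assoc, hDm]; ring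
      rw [h3, pow_mul]
      have hγn : γ ^ n = 1 := by rw [← hord]; exact pow_orderOf_eq_one γ
      rw [hγn, one_pow]
    have h1 : ((γ ^ (u * D))⁻¹ : Eˣ) ^ q = (γ ^ (u * D))⁻¹ := by
      have h4 : q = m + 1 := by omega
      rw [h4, pow_succ, inv_pow, h2, inv_one, one_mul]
    rw [← Units.val_pow_eq_pow_val, h1]
  -- uniqueness of the factorization
  have pairEq : ∀ (a a' : F) (g g' : Polynomial F), g.Monic → g'.Monic →
      Irreducible g → Irreducible g' → g.natDegree = k → g'.natDegree = k →
      (X - C a) * g = (X - C a') * g' → a = a' ∧ g = g' := by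
    intro a a' g g' hgm hgm' hgi hgi' hgd hgd' heq
    have hdvd : g' ∣ (X - C a) * g := ⟨X - C a', by rw [heq, mul_comm]⟩
    rcases (hgi'.prime).2.2 _ _ hdvd with hcase | hcase
    · exfalso
      have hle := Polynomial.natDegree_le_of_dvd hcase (Polynomial.X_sub_C_ne_zero a)
      rw [hgd', Polynomial.natDegree_X_sub_C] at hle
      omega
    · have hassoc : Associated g' g := hgi'.associated_of_dvd hgi hcase
      have hgg : g' = g := Polynomial.eq_of_monic_of_associated hgm' hgm hassoc
      subst hgg
      have hxc : (X : Polynomial F) - C a = X - C a' :=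
        mul_right_cancel₀ hgm.ne_zero heq
      have hca : C a = C a' := by
        have := sub_right_injective hxc
        exact this
      exact ⟨Polynomial.C_injective hca, rfl⟩
  -- counting sets
  set T : Finset (ZMod m × ZMod n) := Finset.univ.filter
      (fun w => Int.gcd (m : ℤ) ((k : ℤ) * (w.1.val : ℤ) - (w.2.val : ℤ)) = 1 ∧
        Nat.Coprime D w.2.val) with hT
  set Ψ : ZMod m × ZMod n → Polynomial F := fun w =>
      minpoly F (((γ ^ (w.1.val * D))⁻¹ : Eˣ) : E) *
      minpoly F (((γ ^ w.2.val)⁻¹ : Eˣ) : E) with hΨ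
  -- nat-power congruence for γ
  have hpoweq : ∀ a b : ℕ, (n : ℤ) ∣ (a : ℤ) - (b : ℤ) → γ ^ a = γ ^ b := by
    intro a b hd
    have h := hzpow (a : ℤ) (b : ℤ) hd
    rwa [zpow_natCast, zpow_natCast] at h
  have hγcast : ∀ a b : ℕ, γ ^ a = γ ^ b → ((a : ZMod n) = (b : ZMod n)) := by
    intro a b hab
    apply (ZMod.natCast_eq_natCast_iff _ _ _).mpr
    have h := pow_eq_pow_iff_modEq.mp hab
    rwa [hord] at h
  have hcastZM : ∀ {M : ℕ} [NeZero M] (u u' : ZMod M),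
      (M : ℤ) ∣ (u.val : ℤ) - (u'.val : ℤ) → u = u' := by
    intro M _ u u' hd
    have h1 : ((u.val : ℤ) : ZMod M) = ((u'.val : ℤ) : ZMod M) :=
      (ZMod.intCast_eq_intCast_iff _ _ _).mpr (Int.modEq_iff_dvd.mpr
        (by rw [show (u'.val : ℤ) - (u.val : ℤ) = -((u.val : ℤ) - (u'.val : ℤ)) by ring]
            exact dvd_neg.mpr hd))
    push_cast at h1
    rwa [ZMod.natCast_rightInverse u, ZMod.natCast_rightInverse u'] at h1
  have hvj : ∀ (j : ℕ) (v : ZMod n),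
      (n : ℤ) ∣ ((q ^ j * v.val : ℕ) : ℤ) - ((((q : ZMod n) ^ j * v).val : ℤ)) := by
    intro j v
    apply my_val_congr
    push_cast
    rw [ZMod.natCast_rightInverse v]
  -- Step 1 : the set equals the image of T under Ψ
  have hSet : {h : Polynomial F | ∃ e₁ e₂ : ℤ,
      Int.gcd ((q : ℤ) - 1) ((k : ℤ) * e₁ - e₂) = 1 ∧ Int.gcd Δ e₂ = 1 ∧
      h = minpoly F ((γ ^ (-(Δ * e₁)) : Eˣ) : E) * minpoly F ((γ ^ (-e₂) : Eˣ) : E)}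
      = ↑(T.image Ψ) := by
    ext h
    simp only [Set.mem_setOf_eq, Finset.coe_image, Set.mem_image, Finset.mem_coe]
    constructor
    · rintro ⟨e₁, e₂, h1, h2, rfl⟩
      have hu := my_val_congr (e₁ : ZMod m) e₁ rfl
      have hv := my_val_congr (e₂ : ZMod n) e₂ rfl
      refine ⟨((e₁ : ZMod m), (e₂ : ZMod n)), ?_, ?_⟩
      · rw [hT, Finset.mem_filter]
        refine ⟨Finset.mem_univ _, ?_, ?_⟩
        · have hcong : (m : ℤ) ∣ ((k : ℤ) * ((e₁ : ZMod m).val : ℤ) - ((e₂ : ZMod n).val : ℤ))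
              - ((k : ℤ) * e₁ - e₂) := by
            have h3 : (m : ℤ) ∣ (e₂ - ((e₂ : ZMod n).val : ℤ)) := dvd_trans hmn hv
            have h4 : (m : ℤ) ∣ (k : ℤ) * (((e₁ : ZMod m).val : ℤ) - e₁) :=
              Dvd.dvd.mul_left (by
                have h5 := dvd_neg.mpr hu
                rwa [neg_sub] at h5) _
            have h5 : ((k : ℤ) * ((e₁ : ZMod m).val : ℤ) - ((e₂ : ZMod n).val : ℤ))
                - ((k : ℤ) * e₁ - e₂)
                = (k : ℤ) * (((e₁ : ZMod m).val : ℤ) - e₁)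
                  + (e₂ - ((e₂ : ZMod n).val : ℤ)) := by ring
            rw [h5]
            exact dvd_add h4 h3
          rw [my_gcd_congr _ _ _ hcong, hmc]
          exact h1
        · have h3 : (D : ℤ) ∣ (e₂ - ((e₂ : ZMod n).val : ℤ)) := dvd_trans hDn hv
          have h4 : Int.gcd (D : ℤ) (((e₂ : ZMod n).val : ℤ)) = Int.gcd (D : ℤ) e₂ :=
            my_gcd_congr _ _ _ (by
              rw [show ((e₂ : ZMod n).val : ℤ) - e₂ = -(e₂ - ((e₂ : ZMod n).val : ℤ)) by ring]
              exact dvd_neg.mpr h3)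
          show Nat.gcd D (e₂ : ZMod n).val = 1
          rw [← Int.gcd_natCast_natCast, h4, hDcast]
          exact h2
      · simp only [hΨ]
        have he1 : ((γ ^ ((e₁ : ZMod m).val * D))⁻¹ : Eˣ) = γ ^ (-(Δ * e₁)) := by
          rw [← zpow_natCast γ ((e₁ : ZMod m).val * D), ← zpow_neg]
          apply hzpow
          rw [← hDcast, hnDm]
          have hr : -(((e₁ : ZMod m).val * D : ℕ) : ℤ) - -((D : ℤ) * e₁)
              = (D : ℤ) * (e₁ - ((e₁ : ZMod m).val : ℤ)) := by push_cast; ring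
          rw [hr]
          exact mul_dvd_mul_left _ hu
        have he2 : ((γ ^ (e₂ : ZMod n).val)⁻¹ : Eˣ) = γ ^ (-e₂) := by
          rw [← zpow_natCast γ (e₂ : ZMod n).val, ← zpow_neg]
          apply hzpow
          have hr : -(((e₂ : ZMod n).val : ℕ) : ℤ) - -e₂ = e₂ - ((e₂ : ZMod n).val : ℤ) := by
            push_cast; ring
          rw [hr]
          exact hv
        rw [he1, he2]
    · rintro ⟨w, hw, rfl⟩
      rw [hT, Finset.mem_filter] at hw
      obtain ⟨-, hw1, hw2⟩ := hw
      refine ⟨(w.1.val : ℤ), (w.2.val : ℤ), ?_, ?_, ?_⟩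
      · rw [← hmc]; exact hw1
      · rw [← hDcast, Int.gcd_natCast_natCast]; exact hw2
      · simp only [hΨ]
        have he1 : (γ ^ (-(Δ * (w.1.val : ℤ))) : Eˣ) = (γ ^ (w.1.val * D))⁻¹ := by
          rw [← zpow_natCast γ (w.1.val * D), ← zpow_neg]
          apply hzpow
          have hr : -(Δ * (w.1.val : ℤ)) - -(((w.1.val * D : ℕ)) : ℤ) = 0 := by
            push_cast
            rw [← hDcast]
            ring
          rw [hr]
          exact dvd_zero _
        have he2 : (γ ^ (-(w.2.val : ℤ)) : Eˣ) = (γ ^ w.2.val)⁻¹ := by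
          rw [zpow_neg, zpow_natCast]
        rw [he1, he2]
  have hncard : {h : Polynomial F | ∃ e₁ e₂ : ℤ,
      Int.gcd ((q : ℤ) - 1) ((k : ℤ) * e₁ - e₂) = 1 ∧ Int.gcd Δ e₂ = 1 ∧
      h = minpoly F ((γ ^ (-(Δ * e₁)) : Eˣ) : E) * minpoly F ((γ ^ (-e₂) : Eˣ) : E)}.ncard
      = (T.image Ψ).card := by
    rw [hSet]
    exact Set.ncard_coe_finset _
  -- Step 2 : fibers of Ψ on T have k elements
  have fiber_card : ∀ w ∈ T, (T.filter (fun w' => Ψ w' = Ψ w)).card = k := by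
    intro w hw
    have hwT := hw
    rw [hT, Finset.mem_filter] at hwT
    obtain ⟨-, hw1, hw2⟩ := hwT
    obtain ⟨hP1, hP2, hP4⟩ := main w.2.val hw2
    obtain ⟨a, ha⟩ := hlin w.1.val
    have hmina : minpoly F (((γ ^ (w.1.val * D))⁻¹ : Eˣ) : E) = X - C a := by
      rw [← ha]
      exact minpoly.eq_X_sub_C E a
    have hfe : T.filter (fun w' => Ψ w' = Ψ w)
        = (Finset.range k).image (fun j => (w.1, (q : ZMod n) ^ j * w.2)) := by
      ext w'
      rw [Finset.mem_filter, Finset.mem_image]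
      constructor
      · rintro ⟨hw'T, hΨeq⟩
        have hw'T2 := hw'T
        rw [hT, Finset.mem_filter] at hw'T2
        obtain ⟨-, hw'1, hw'2⟩ := hw'T2
        obtain ⟨hP1', hP2', hP4'⟩ := main w'.2.val hw'2
        obtain ⟨a', ha'⟩ := hlin w'.1.val
        have hmina' : minpoly F (((γ ^ (w'.1.val * D))⁻¹ : Eˣ) : E) = X - C a' := by
          rw [← ha']
          exact minpoly.eq_X_sub_C E a'
        simp only [hΨ] at hΨeq
        rw [hmina, hmina'] at hΨeq
        have hint1 : IsIntegral F (((γ ^ w.2.val)⁻¹ : Eˣ) : E) := IsIntegral.of_finite F _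
        have hint2 : IsIntegral F (((γ ^ w'.2.val)⁻¹ : Eˣ) : E) := IsIntegral.of_finite F _
        obtain ⟨haa, hgg⟩ := pairEq a' a _ _ (minpoly.monic hint2) (minpoly.monic hint1)
          (minpoly.irreducible hint2) (minpoly.irreducible hint1) hP2' hP2 hΨeq
        have hu : w'.1 = w.1 := by
          have hx : (((γ ^ (w'.1.val * D))⁻¹ : Eˣ) : E) = (((γ ^ (w.1.val * D))⁻¹ : Eˣ) : E) := by
            rw [← ha, ← ha', haa]
          have hxu : ((γ ^ (w'.1.val * D))⁻¹ : Eˣ) = (γ ^ (w.1.val * D))⁻¹ := Units.ext hx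
          have hγeq : γ ^ (w'.1.val * D) = γ ^ (w.1.val * D) := inv_injective hxu
          have hd := hmodEq _ _ hγeq
          rw [hnDm] at hd
          have hr : ((w.1.val * D : ℕ) : ℤ) - ((w'.1.val * D : ℕ) : ℤ)
              = (D : ℤ) * ((w.1.val : ℤ) - (w'.1.val : ℤ)) := by push_cast; ring
          rw [hr] at hd
          have hDne : (D : ℤ) ≠ 0 := by
            simp only [ne_eq, Nat.cast_eq_zero]
            omega
          have hmd := (mul_dvd_mul_iff_left hDne).mp hd
          apply hcastZM
          rw [show (w'.1.val : ℤ) - (w.1.val : ℤ) = -((w.1.val : ℤ) - (w'.1.val : ℤ)) by ring]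
          exact dvd_neg.mpr hmd
        have hyz : Polynomial.aeval (((γ ^ w'.2.val)⁻¹ : Eˣ) : E)
            (minpoly F (((γ ^ w.2.val)⁻¹ : Eˣ) : E)) = 0 := by
          rw [← hgg]
          exact minpoly.aeval F _
        obtain ⟨j, hjk, hje⟩ := hP4 _ hyz
        refine ⟨j, Finset.mem_range.mpr hjk, ?_⟩
        have hxu : ((γ ^ w'.2.val)⁻¹ : Eˣ) = ((γ ^ w.2.val)⁻¹) ^ q ^ j := by
          apply Units.ext
          rw [Units.val_pow_eq_pow_val]
          exact hje
        rw [inv_pow, ← pow_mul] at hxu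
        have hγeq : γ ^ w'.2.val = γ ^ (w.2.val * q ^ j) := inv_injective hxu
        have hv' : w'.2 = (q : ZMod n) ^ j * w.2 := by
          have h1 : ((w'.2.val : ℕ) : ZMod n) = ((w.2.val * q ^ j : ℕ) : ZMod n) :=
            hγcast _ _ hγeq
          rw [ZMod.natCast_rightInverse w'.2] at h1
          push_cast at h1
          rw [ZMod.natCast_rightInverse w.2] at h1
          rw [h1]
          ring
        rw [Prod.ext_iff]
        exact ⟨hu.symm, hv'.symm⟩
      · rintro ⟨j, hj, rfl⟩
        rw [Finset.mem_range] at hj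
        have hvj' := hvj j w.2
        have hγeq2 : γ ^ ((q : ZMod n) ^ j * w.2).val = γ ^ (w.2.val * q ^ j) := by
          apply hpoweq
          rw [show ((((q : ZMod n) ^ j * w.2).val : ℤ)) - ((w.2.val * q ^ j : ℕ) : ℤ)
              = -(((q ^ j * w.2.val : ℕ) : ℤ) - ((((q : ZMod n) ^ j * w.2).val : ℤ))) by
            push_cast; ring]
          exact dvd_neg.mpr hvj'
        constructor
        · rw [hT, Finset.mem_filter]
          refine ⟨Finset.mem_univ _, ?_, ?_⟩
          · have hcong : (m : ℤ) ∣ ((k : ℤ) * (w.1.val : ℤ) - (((q : ZMod n) ^ j * w.2).val : ℤ))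
                - ((k : ℤ) * (w.1.val : ℤ) - (w.2.val : ℤ)) := by
              have h1 : (m : ℤ) ∣ ((q ^ j * w.2.val : ℕ) : ℤ)
                  - ((((q : ZMod n) ^ j * w.2).val : ℤ)) := dvd_trans hmn hvj'
              have h2 : (m : ℤ) ∣ ((q : ℤ) ^ j - 1) * (w.2.val : ℤ) :=
                Dvd.dvd.mul_right (hdvdpow j) _
              have hr : ((k : ℤ) * (w.1.val : ℤ) - (((q : ZMod n) ^ j * w.2).val : ℤ))
                  - ((k : ℤ) * (w.1.val : ℤ) - (w.2.val : ℤ))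
                  = (((q ^ j * w.2.val : ℕ) : ℤ) - ((((q : ZMod n) ^ j * w.2).val : ℤ)))
                    - (((q : ℤ) ^ j - 1) * (w.2.val : ℤ)) := by push_cast; ring
              rw [hr]
              exact dvd_sub h1 h2
            rw [my_gcd_congr _ _ _ hcong]
            exact hw1
          · have h1 : Int.gcd (D : ℤ) ((((q : ZMod n) ^ j * w.2).val : ℤ))
                = Int.gcd (D : ℤ) (((q ^ j * w.2.val : ℕ)) : ℤ) := by
              apply my_gcd_congr
              apply dvd_trans hDn
              rw [show ((((q : ZMod n) ^ j * w.2).val : ℤ)) - ((q ^ j * w.2.val : ℕ) : ℤ)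
                  = -(((q ^ j * w.2.val : ℕ) : ℤ) - ((((q : ZMod n) ^ j * w.2).val : ℤ))) by ring]
              exact dvd_neg.mpr hvj'
            show Nat.gcd D ((q : ZMod n) ^ j * w.2).val = 1
            rw [← Int.gcd_natCast_natCast, h1, Int.gcd_natCast_natCast]
            exact Nat.coprime_mul_iff_right.mpr ⟨hDq.pow_right j, hw2⟩
        · simp only [hΨ]
          congr 1
          have hueq : (((γ ^ ((q : ZMod n) ^ j * w.2).val)⁻¹ : Eˣ) : E)
              = (((γ ^ w.2.val)⁻¹ : Eˣ) : E) ^ q ^ j := by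
            rw [← Units.val_pow_eq_pow_val]
            congr 1
            rw [inv_pow, ← pow_mul]
            exact congrArg Inv.inv hγeq2
          rw [hueq, hminpow]
    rw [hfe, Finset.card_image_of_injOn, Finset.card_range]
    intro i hi j hj hij
    rw [Finset.mem_coe, Finset.mem_range] at hi hj
    have h2 := congrArg Prod.snd hij
    simp only at h2
    have hc1 : ((q ^ i * w.2.val : ℕ) : ZMod n) = ((q ^ j * w.2.val : ℕ) : ZMod n) := by
      push_cast
      rw [ZMod.natCast_rightInverse w.2]
      exact h2
    have hγe : γ ^ (q ^ i * w.2.val) = γ ^ (q ^ j * w.2.val) := by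
      apply hpoweq
      exact ((ZMod.natCast_eq_natCast_iff _ _ _).mp hc1).symm.dvd
    have hpe : (γ ^ w.2.val) ^ q ^ i = (γ ^ w.2.val) ^ q ^ j := by
      rw [← pow_mul, ← pow_mul, mul_comm w.2.val (q ^ i), mul_comm w.2.val (q ^ j)]
      exact hγe
    have hinv : ((γ ^ w.2.val)⁻¹ : Eˣ) ^ q ^ i = ((γ ^ w.2.val)⁻¹) ^ q ^ j := by
      rw [inv_pow, inv_pow, hpe]
    have hEe : (((γ ^ w.2.val)⁻¹ : Eˣ) : E) ^ q ^ i = (((γ ^ w.2.val)⁻¹ : Eˣ) : E) ^ q ^ j := by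
      rw [← Units.val_pow_eq_pow_val, ← Units.val_pow_eq_pow_val, hinv]
    exact hP1 i j hi hj hEe
  -- Step 2' : summing over fibers
  have hsum : T.card = (T.image Ψ).card * k := by
    have hcc : ∀ b ∈ T.image Ψ, (T.filter fun w' => Ψ w' = b).card = k := by
      intro b hb
      obtain ⟨w, hwT, rfl⟩ := Finset.mem_image.mp hb
      exact fiber_card w hwT
    rw [Finset.card_eq_sum_card_image Ψ T, Finset.sum_congr rfl hcc, Finset.sum_const,
      smul_eq_mul]
  -- Step 3 : Bezout shift
  have hcex : ∀ u : ZMod m, ∃ c : ℤ, (D : ℤ) ∣ c ∧ (m : ℤ) ∣ (c - (k : ℤ) * (u.val : ℤ)) := by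
    intro u
    have hgk : (Int.gcd (D : ℤ) (m : ℤ) : ℤ) ∣ (k : ℤ) := by
      have h1 : (Int.gcd (D : ℤ) (m : ℤ) : ℤ) ∣ (D : ℤ) := Int.gcd_dvd_left _ _
      have h2 : (Int.gcd (D : ℤ) (m : ℤ) : ℤ) ∣ (m : ℤ) := Int.gcd_dvd_right _ _
      have h3 : (Int.gcd (D : ℤ) (m : ℤ) : ℤ) ∣ (D : ℤ) - (k : ℤ) := h2.trans hmDk
      simpa using dvd_sub h1 h3
    obtain ⟨t, ht⟩ := hgk
    have hbez := Int.gcd_eq_gcd_ab (D : ℤ) (m : ℤ)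
    refine ⟨(D : ℤ) * (Int.gcdA (D : ℤ) (m : ℤ) * (t * (u.val : ℤ))), dvd_mul_right _ _, ?_⟩
    refine ⟨-(Int.gcdB (D : ℤ) (m : ℤ)) * (t * (u.val : ℤ)), ?_⟩
    have hk2 : (k : ℤ) * (u.val : ℤ) = ((Int.gcd (D : ℤ) (m : ℤ) : ℤ) * t) * (u.val : ℤ) := by
      rw [← ht]
    rw [hk2, hbez]
    ring
  choose cc hcc1 hcc2 using hcex
  have hTiff : ∀ w : ZMod m × ZMod n, w ∈ T ↔ IsUnit (w.2 - ((cc w.1 : ℤ) : ZMod n)) := by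
    intro w
    have hv : (((w.2.val : ℤ)) : ZMod n) = w.2 := by
      push_cast
      exact ZMod.natCast_rightInverse w.2
    have hcast : w.2 - ((cc w.1 : ℤ) : ZMod n) = ((((w.2.val : ℤ) - cc w.1) : ℤ) : ZMod n) := by
      rw [Int.cast_sub, hv]
    rw [hcast, my_isUnit_intCast]
    have hsplit := my_gcd_mul ((w.2.val : ℤ) - cc w.1) D m
    rw [← hnDm] at hsplit
    rw [hsplit]
    have e1 : Int.gcd ((w.2.val : ℤ) - cc w.1) (D : ℤ) = Nat.gcd D w.2.val := by
      rw [my_gcd_congr' _ ((w.2.val : ℤ)) _ (by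
        rw [show ((w.2.val : ℤ) - cc w.1) - (w.2.val : ℤ) = -(cc w.1) by ring]
        exact dvd_neg.mpr (hcc1 w.1))]
      rw [Int.gcd_natCast_natCast, Nat.gcd_comm]
    have e2 : Int.gcd ((w.2.val : ℤ) - cc w.1) (m : ℤ)
        = Int.gcd (m : ℤ) ((k : ℤ) * (w.1.val : ℤ) - (w.2.val : ℤ)) := by
      rw [my_gcd_congr' _ ((w.2.val : ℤ) - (k : ℤ) * (w.1.val : ℤ)) _ (by
        rw [show ((w.2.val : ℤ) - cc w.1) - ((w.2.val : ℤ) - (k : ℤ) * (w.1.val : ℤ))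
            = -(cc w.1 - (k : ℤ) * (w.1.val : ℤ)) by ring]
        exact dvd_neg.mpr (hcc2 w.1))]
      rw [show (w.2.val : ℤ) - (k : ℤ) * (w.1.val : ℤ)
          = -((k : ℤ) * (w.1.val : ℤ) - (w.2.val : ℤ)) by ring]
      rw [Int.neg_gcd, Int.gcd_comm]
    rw [e1, e2, hT, Finset.mem_filter]
    constructor
    · rintro ⟨-, h1, h2⟩
      exact ⟨h2, h1⟩
    · rintro ⟨h2, h1⟩
      exact ⟨Finset.mem_univ _, h1, h2⟩
  have hbij : T.card = (Finset.univ.filter (fun w : ZMod m × ZMod n => IsUnit w.2)).card := by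
    apply Finset.card_bij (fun w _ => (w.1, w.2 - ((cc w.1 : ℤ) : ZMod n)))
    · intro w hwT
      rw [Finset.mem_filter]
      exact ⟨Finset.mem_univ _, (hTiff w).mp hwT⟩
    · intro w1 h1 w2 h2 heq
      rw [Prod.mk.injEq] at heq
      obtain ⟨ha, hb⟩ := heq
      have hs2 : w1.2 = w2.2 := by
        rw [ha] at hb
        have h3 := congrArg (fun z => z + ((cc w2.1 : ℤ) : ZMod n)) hb
        simpa using h3
      exact Prod.ext ha hs2
    · intro b hb
      rw [Finset.mem_filter] at hb
      refine ⟨(b.1, b.2 + ((cc b.1 : ℤ) : ZMod n)), ?_, ?_⟩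
      · apply (hTiff _).mpr
        simpa using hb.2
      · simp
  have hfin : (Finset.univ.filter (fun w : ZMod m × ZMod n => IsUnit w.2)).card
      = m * Nat.totient n := by
    have hsplit : (Finset.univ.filter (fun w : ZMod m × ZMod n => IsUnit w.2))
        = Finset.univ ×ˢ (Finset.univ.filter (fun z : ZMod n => IsUnit z)) := by
      ext w
      simp [Finset.mem_product, Finset.mem_filter]
    rw [hsplit, Finset.card_product, Finset.card_univ, ZMod.card]
    congr 1
    rw [← ZMod.card_units_eq_totient n, ← Finset.card_univ]
    apply Finset.card_bij (fun z hz => (Finset.mem_filter.mp hz).2.unit)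
    · intro a ha
      exact Finset.mem_univ _
    · intro a ha b hb hab
      have h := congrArg Units.val hab
      rwa [IsUnit.unit_spec, IsUnit.unit_spec] at h
    · intro u _
      exact ⟨(u : ZMod n), Finset.mem_filter.mpr ⟨Finset.mem_univ _, u.isUnit⟩,
        Units.ext (IsUnit.unit_spec _)⟩
  rw [hncard, ← hsum, hbij, hfin, Nat.mul_comm]
end

section
/- Let q be a prime power, k ≥ 1, Δ = (q^k − 1)/(q − 1), and γ a primitive element of F_{q^k}. Then the number of distinct minimal polynomials over F_q of elements γ^{−e}, where e ranges over all integers with gcd(Δ, e) = 1, equals φ(Δ)·(q − 1)/k, where φ is the Euler totient function. -/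
private lemma aux_count (a : ℕ) (c : ℕ) :
    ((Finset.range (a * c)).filter a.Coprime).card = a.totient * c := by
  induction c with
  | zero => simp
  | succ n ih =>
    have h1 : Finset.range (a * (n+1)) = Finset.range (a*n) ∪ Finset.Ico (a*n) (a*n + a) := by
      rw [Finset.range_eq_Ico, Finset.range_eq_Ico, Nat.mul_succ]
      exact (Finset.Ico_union_Ico_eq_Ico (Nat.zero_le _) (Nat.le_add_right _ _)).symm
    have h2 : Disjoint ((Finset.range (a*n)).filter a.Coprime)
        ((Finset.Ico (a*n) (a*n + a)).filter a.Coprime) := by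
      refine Finset.disjoint_filter_filter ?_
      rw [Finset.range_eq_Ico]
      exact Finset.Ico_disjoint_Ico_consecutive 0 (a*n) (a*n+a)
    rw [h1, Finset.filter_union, Finset.card_union_of_disjoint h2, ih,
        Nat.filter_coprime_Ico_eq_totient, Nat.mul_succ]

private lemma aux_minpoly_pow (F E : Type*) [Field F] [Fintype F] [Field E] [Fintype E]
    [Algebra F E] (x : E) :
    minpoly F (x ^ Fintype.card F) = minpoly F x := by
  haveI : FiniteDimensional F E := Module.Finite.of_finite
  obtain ⟨p, hp⟩ := CharP.exists F
  haveI := hp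
  haveI : Fact p.Prime := ⟨(CharP.char_is_prime F p)⟩
  obtain ⟨n, hpp, hq⟩ := FiniteField.card F p
  haveI : CharP E p := charP_of_injective_algebraMap (algebraMap F E).injective p
  let φ : E →+* E := iterateFrobenius E p n
  have hφ : ∀ y : E, φ y = y ^ Fintype.card F := by
    intro y; rw [hq]; exact iterateFrobenius_def p n y
  have hint : IsIntegral F x := Algebra.IsIntegral.isIntegral x
  have hcomp : φ.comp (algebraMap F E) = algebraMap F E := by
    ext a
    simp only [RingHom.coe_comp, Function.comp_apply, hφ, ← map_pow,
      FiniteField.pow_card]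
  have haev : Polynomial.aeval (x ^ Fintype.card F) (minpoly F x) = 0 := by
    have := Polynomial.hom_eval₂ (minpoly F x) (algebraMap F E) φ x
    rw [hcomp] at this
    rw [← hφ x, Polynomial.aeval_def, ← this, ← Polynomial.aeval_def,
      minpoly.aeval, map_zero]
  exact (minpoly.eq_of_irreducible_of_monic (minpoly.irreducible hint) haev
    (minpoly.monic hint)).symm

private lemma aux_minpoly_pow_pow (F E : Type*) [Field F] [Fintype F] [Field E] [Fintype E]
    [Algebra F E] (x : E) (i : ℕ) :
    minpoly F (x ^ (Fintype.card F) ^ i) = minpoly F x := by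
  induction i with
  | zero => simp
  | succ n ih => rw [pow_succ, pow_mul, aux_minpoly_pow, ih]

/-- The number of distinct minimal polynomials over `F_q` of the elements `γ^{−e}` with
`gcd(Δ, e) = 1` equals `φ(Δ)·(q − 1)/k`. -/
theorem count_minimal_polynomials
    (q k : ℕ) (hk : 1 ≤ k)
    (F E : Type*) [Field F] [Fintype F] [Field E] [Fintype E] [Algebra F E]
    (hcard : Fintype.card F = q) (hE : Fintype.card E = q ^ k)
    (γ : Eˣ) (hγ : ∀ x : Eˣ, x ∈ Subgroup.zpowers γ)
    (Δ : ℕ) (hΔ : Δ * (q - 1) = q ^ k - 1) :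
    {h : Polynomial F | ∃ e : ℤ,
        Int.gcd (Δ : ℤ) e = 1 ∧ h = minpoly F ((γ ^ (-e) : Eˣ) : E)}.ncard * k
      = Nat.totient Δ * (q - 1) := by
  classical
  haveI : FiniteDimensional F E := Module.Finite.of_finite
  set N : ℕ := q ^ k - 1 with hNdef
  -- basic numerology
  have hq2 : 2 ≤ q := by
    rw [← hcard]; exact Fintype.one_lt_card
  have hqk1 : 1 ≤ q ^ k := Nat.one_le_pow k q (by omega)
  have hqk2 : 2 ≤ q ^ k := Nat.one_lt_pow (by omega) hq2
  have hN0 : 0 < N := by omega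
  have hNmul : N = Δ * (q - 1) := hΔ.symm
  have hΔ0 : 0 < Δ := by
    rcases Nat.eq_zero_or_pos Δ with h | h
    · rw [h, zero_mul] at hΔ; omega
    · exact h
  have hΔdvdN : Δ ∣ N := ⟨q - 1, hNmul⟩
  have horder : orderOf γ = N := by
    rw [orderOf_eq_card_of_forall_mem_zpowers hγ, Nat.card_eq_fintype_card,
      Fintype.card_units, hE]
  have hNcopq : N.Coprime q := by
    have h1 : Nat.gcd N q ∣ q ^ k := (Nat.gcd_dvd_right N q).trans (dvd_pow_self q (by omega))
    have h2 : Nat.gcd N q ∣ N := Nat.gcd_dvd_left N q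
    have h3 : Nat.gcd N q ∣ 1 := by
      have h4 := Nat.dvd_sub h1 h2
      rwa [hNdef, Nat.sub_sub_self hqk1] at h4
    exact Nat.dvd_one.mp h3
  have hcopΔq : Δ.Coprime q := Nat.Coprime.coprime_dvd_left hΔdvdN hNcopq
  have hΔbig : q ^ (k - 1) ≤ Δ := by
    have e1 : q ^ (k - 1) * (q - 1) ≤ N := by
      rw [hNdef, Nat.mul_sub, mul_one, ← pow_succ, Nat.sub_add_cancel hk]
      have h6 : 1 ≤ q ^ (k - 1) := Nat.one_le_pow _ _ (by omega)
      omega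
    rw [← hΔ] at e1
    exact Nat.le_of_mul_le_mul_right e1 (by omega)
  -- distinctness of Frobenius orbit
  have hdist : ∀ m : ℕ, Δ.Coprime m → ∀ i j, i < k → j < k →
      (γ ^ m) ^ q ^ i = (γ ^ m) ^ q ^ j → i = j := by
    have key : ∀ m : ℕ, Δ.Coprime m → ∀ i j, i ≤ j → j < k →
        (γ ^ m) ^ q ^ i = (γ ^ m) ^ q ^ j → i = j := by
      intro m hm i j hij hjk heq
      by_contra hne
      have hij' : i < j := lt_of_le_of_ne hij hne
      set x : Eˣ := γ ^ m with hx
      set d : ℕ := orderOf x with hd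
      have hgN : Nat.gcd N m ∣ q - 1 := by
        have hgΔ : (Nat.gcd N m).Coprime Δ :=
          ((Nat.Coprime.coprime_dvd_right (Nat.gcd_dvd_right N m) hm)).symm
        have : Nat.gcd N m ∣ Δ * (q - 1) := hNmul ▸ Nat.gcd_dvd_left N m
        exact (Nat.Coprime.dvd_of_dvd_mul_left hgΔ this)
      have hdval : d = Δ * ((q - 1) / Nat.gcd N m) := by
        rw [hd, hx, orderOf_pow, horder, ← Nat.mul_div_assoc Δ hgN, ← hNmul]
      have hΔd : Δ ∣ d := ⟨_, hdval⟩
      have hdN : d ∣ N := by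
        have h7 : orderOf x ∣ Fintype.card Eˣ := orderOf_dvd_card
        rwa [Fintype.card_units, hE] at h7
      have hdcopq : d.Coprime (q ^ i) :=
        Nat.Coprime.pow_right _ (Nat.Coprime.coprime_dvd_left hdN hNcopq)
      -- order of y = x ^ (q ^ i) is d
      have hyord : orderOf (x ^ q ^ i) = d := by
        rw [orderOf_pow, ← hd, Nat.Coprime.gcd_eq_one hdcopq, Nat.div_one]
      have hypow : (x ^ q ^ i) ^ q ^ (j - i) = (x ^ q ^ i) ^ 1 := by
        rw [pow_one, ← pow_mul, ← pow_add]
        have h8 : i + (j - i) = j := by omega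
        rw [h8]
        exact heq.symm
      have hmod : q ^ (j - i) ≡ 1 [MOD d] := by
        have := pow_eq_pow_iff_modEq.mp hypow
        rwa [hyord] at this
      have hdvd : d ∣ q ^ (j - i) - 1 :=
        (Nat.modEq_iff_dvd' (Nat.one_le_pow _ _ (by omega))).mp hmod.symm
      have hΔdvd : Δ ∣ q ^ (j - i) - 1 := hΔd.trans hdvd
      have hlt : q ^ (j - i) - 1 < Δ := by
        have h5 : q ^ (j - i) ≤ q ^ (k - 1) := Nat.pow_le_pow_right (by omega) (by omega)
        omega
      have hpos : 0 < q ^ (j - i) - 1 := by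
        have : 2 ≤ q ^ (j - i) := Nat.one_lt_pow (by omega) hq2
        omega
      exact absurd (Nat.le_of_dvd hpos hΔdvd) (not_le.mpr hlt)
    intro m hm i j hik hjk heq
    rcases le_total i j with h | h
    · exact key m hm i j h hjk heq
    · exact (key m hm j i h hik heq.symm).symm
  -- the finite set of exponents and the image of minimal polynomials
  set M : Finset ℕ := (Finset.range N).filter Δ.Coprime with hM
  set mp : ℕ → Polynomial F := fun m => minpoly F ((γ ^ m : Eˣ) : E) with hmp
  set S : Finset (Polynomial F) := M.image mp with hS
  have hrank : Module.finrank F E = k := by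
    have h9 := Module.card_eq_pow_finrank (K := F) (V := E)
    rw [hcard, hE] at h9
    exact (Nat.pow_right_injective hq2 h9.symm)
  have hinj : ∀ m ∈ Finset.range N, ∀ m' ∈ Finset.range N,
      ((γ ^ m : Eˣ) : E) = ((γ ^ m' : Eˣ) : E) → m = m' := by
    intro m hm m' hm' h
    have h10 : (γ : Eˣ) ^ m = γ ^ m' := Units.ext h
    exact pow_injOn_Iio_orderOf (by simpa [horder] using Finset.mem_range.mp hm)
      (by simpa [horder] using Finset.mem_range.mp hm') h10
  -- each fiber of mp over S has exactly k elements
  have hfiber : ∀ p ∈ S, (M.filter (fun m => mp m = p)).card = k := by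
    intro p hp
    obtain ⟨m0, hm0M, hm0p⟩ := Finset.mem_image.mp hp
    have hm0range : m0 ∈ Finset.range N := (Finset.mem_filter.mp hm0M).1
    have hm0cop : Δ.Coprime m0 := (Finset.mem_filter.mp hm0M).2
    have hx0int : IsIntegral F ((γ ^ m0 : Eˣ) : E) := Algebra.IsIntegral.isIntegral _
    have hpne : p.map (algebraMap F E) ≠ 0 := by
      rw [← hm0p, hmp]
      exact Polynomial.map_ne_zero (minpoly.ne_zero hx0int)
    -- upper bound
    have hub : (M.filter (fun m => mp m = p)).card ≤ k := by
      have hsub : ∀ m ∈ M.filter (fun m => mp m = p),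
          ((γ ^ m : Eˣ) : E) ∈ (p.map (algebraMap F E)).roots.toFinset := by
        intro m hm
        obtain ⟨hmM, hmp'⟩ := Finset.mem_filter.mp hm
        rw [Multiset.mem_toFinset, Polynomial.mem_roots hpne]
        show Polynomial.IsRoot _ _
        rw [Polynomial.IsRoot, Polynomial.eval_map, ← Polynomial.aeval_def, ← hmp', hmp]
        exact minpoly.aeval F _
      have hinjOn : Set.InjOn (fun m => ((γ ^ m : Eˣ) : E)) (M.filter (fun m => mp m = p)) := by
        intro a ha b hb hab
        exact hinj a (Finset.mem_filter.mp (Finset.mem_filter.mp ha).1).1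
          b (Finset.mem_filter.mp (Finset.mem_filter.mp hb).1).1 hab
      have h11 := Finset.card_le_card_of_injOn _ hsub hinjOn
      refine h11.trans ?_
      have h12 : (p.map (algebraMap F E)).roots.toFinset.card
          ≤ (p.map (algebraMap F E)).natDegree :=
        le_trans (Multiset.toFinset_card_le _) (Polynomial.card_roots' _)
      refine h12.trans ?_
      rw [Polynomial.natDegree_map, ← hm0p, hmp]
      exact hrank ▸ minpoly.natDegree_le _
    -- lower bound: the Frobenius orbit
    have hγpow : ∀ i : ℕ, (γ : Eˣ) ^ ((m0 * q ^ i) % N) = (γ ^ m0) ^ q ^ i := by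
      intro i
      rw [← pow_mul, ← horder, pow_mod_orderOf]
    have horb : ∀ i, i < k → (m0 * q ^ i) % N ∈ M.filter (fun m => mp m = p) := by
      intro i hik
      have hmem : (m0 * q ^ i) % N ∈ Finset.range N := Finset.mem_range.mpr (Nat.mod_lt _ hN0)
      have hcop : Δ.Coprime ((m0 * q ^ i) % N) := by
        have h1 : Δ.Coprime (m0 * q ^ i) := Nat.Coprime.mul_right hm0cop (hcopΔq.pow_right i)
        have h2 := Nat.mod_add_div (m0 * q ^ i) N
        have h3 : Δ.Coprime ((m0 * q ^ i) % N + Δ * ((q - 1) * ((m0 * q ^ i) / N))) := by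
          rw [← mul_assoc, ← hNmul, h2]; exact h1
        exact (Nat.coprime_add_mul_left_right _ _ _).mp h3
      have hval : mp ((m0 * q ^ i) % N) = p := by
        rw [hmp]
        show minpoly F ((γ ^ ((m0 * q ^ i) % N) : Eˣ) : E) = p
        rw [hγpow i, Units.val_pow_eq_pow_val, Units.val_pow_eq_pow_val, ← hcard,
          aux_minpoly_pow_pow, ← Units.val_pow_eq_pow_val]
        exact hm0p
      exact Finset.mem_filter.mpr ⟨Finset.mem_filter.mpr ⟨hmem, hcop⟩, hval⟩
    have hlb : k ≤ (M.filter (fun m => mp m = p)).card := by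
      have hinj2 : Set.InjOn (fun i => (m0 * q ^ i) % N) (Finset.range k) := by
        intro i hi j hj hij
        refine hdist m0 hm0cop i j (by simpa using hi) (by simpa using hj) ?_
        have hij' : m0 * q ^ i % N = m0 * q ^ j % N := hij
        rw [← hγpow i, ← hγpow j, hij']
      have h13 := Finset.card_le_card_of_injOn (fun i => (m0 * q ^ i) % N)
        (fun i hi => horb i (Finset.mem_range.mp hi)) hinj2
      simpa using h13
    exact le_antisymm hub hlb
  -- the set in the statement is the coercion of S
  have hsetEq : {h : Polynomial F | ∃ e : ℤ,
      Int.gcd (Δ : ℤ) e = 1 ∧ h = minpoly F ((γ ^ (-e) : Eˣ) : E)} = ↑S := by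
    ext h
    simp only [Set.mem_setOf_eq, hS, Finset.coe_image, Set.mem_image, Finset.mem_coe]
    constructor
    · rintro ⟨e, he, rfl⟩
      have h0N : (0 : ℤ) < (N : ℤ) := by exact_mod_cast hN0
      set a : ℤ := (-e) % (N : ℤ) with ha
      have ha0 : 0 ≤ a := Int.emod_nonneg _ (ne_of_gt h0N)
      have haN : a < (N : ℤ) := Int.emod_lt_of_pos _ h0N
      refine ⟨a.toNat, ?_, ?_⟩
      · refine Finset.mem_filter.mpr ⟨Finset.mem_range.mpr (by omega), ?_⟩
        have hco : IsCoprime (Δ : ℤ) e := Int.isCoprime_iff_gcd_eq_one.mpr he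
        have hNZ : (N : ℤ) = (Δ : ℤ) * ((q - 1 : ℕ) : ℤ) := by exact_mod_cast hNmul
        have hrepr : a = -e + (Δ : ℤ) * (((q - 1 : ℕ) : ℤ) * (-((-e) / (N : ℤ)))) := by
          rw [ha, Int.emod_def, hNZ]; ring
        have hcoa : IsCoprime (Δ : ℤ) a := by
          rw [hrepr]
          exact hco.neg_right.add_mul_left_right _
        have hga : Int.gcd (Δ : ℤ) a = 1 := Int.isCoprime_iff_gcd_eq_one.mp hcoa
        show Nat.Coprime Δ a.toNat
        rw [Nat.Coprime]
        rw [Int.gcd_def, Int.natAbs_natCast] at hga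
        rwa [show a.natAbs = a.toNat by omega] at hga
      · have hu : (γ : Eˣ) ^ (-e) = γ ^ a.toNat := by
          have h14 : γ ^ a = γ ^ (-e) := by
            rw [ha, ← horder]
            exact zpow_mod_orderOf γ (-e)
          calc γ ^ (-e) = γ ^ a := h14.symm
            _ = γ ^ ((a.toNat : ℕ) : ℤ) := by rw [Int.toNat_of_nonneg ha0]
            _ = γ ^ a.toNat := zpow_natCast γ a.toNat
        show minpoly F ((γ ^ a.toNat : Eˣ) : E) = minpoly F ((γ ^ (-e) : Eˣ) : E)
        rw [hu]
    · rintro ⟨m, hmM, rfl⟩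
      refine ⟨-(m : ℤ), ?_, ?_⟩
      · have hcop : Δ.Coprime m := (Finset.mem_filter.mp hmM).2
        rw [Int.gcd_def, Int.natAbs_neg, Int.natAbs_natCast, Int.natAbs_natCast]
        exact hcop
      · rw [hmp]
        show minpoly F ((γ ^ m : Eˣ) : E) = minpoly F ((γ ^ (-(-(m : ℤ))) : Eˣ) : E)
        rw [neg_neg, zpow_natCast]
  have hcardM : M.card = Δ.totient * (q - 1) := by
    rw [hM]
    have : (Finset.range N) = Finset.range (Δ * (q - 1)) := by rw [← hNmul]
    rw [this]
    exact aux_count Δ (q - 1)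
  have hsum : M.card = S.card * k := by
    rw [hS, Finset.card_eq_sum_card_fiberwise (fun m hm => Finset.mem_image_of_mem mp hm),
      ← hS, Finset.sum_congr rfl hfiber, Finset.sum_const, smul_eq_mul]
  rw [hsetEq, Set.ncard_coe_finset, ← hsum]
  exact hcardM
end

section
/- Let n ≥ 1 be an integer, and let k and e be integers such that gcd(gcd(k, n), e) = 1. Then the number of integers x with 0 ≤ x < n and gcd(n, k·x − e) = 1 equals φ(n)·d/φ(d), where d = gcd(k, n) and φ is the Euler totient function. (Applied with n = q − 1, k the extension degree, and e = e₂, this counts the choices of e₁ modulo q − 1 with gcd(q − 1, k·e₁ − e₂) = 1 in Theorem 5.) -/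
open Finset

lemma aux_isUnit_intCast_iff (n : ℕ) [NeZero n] (a : ℤ) :
    IsUnit ((a : ZMod n)) ↔ Int.gcd (n : ℤ) a = 1 := by
  have hn0 : (n : ℤ) ≠ 0 := by exact_mod_cast (NeZero.ne n)
  have hmod : (0:ℤ) ≤ a % n := Int.emod_nonneg a hn0
  have h1 : (a : ZMod n) = (((a % n).toNat : ℕ) : ZMod n) := by
    rw [← Int.cast_natCast, Int.toNat_of_nonneg hmod,
        ZMod.intCast_eq_intCast_iff', Int.emod_emod_of_dvd a dvd_rfl]
  have hrepr : a % (n:ℤ) = a + (n:ℤ) * (-(a / n)) := by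
    rw [mul_neg, ← sub_eq_add_neg, Int.emod_def]
  rw [h1, ZMod.isUnit_iff_coprime]
  have h3 : Nat.Coprime (a % n).toNat n ↔ Int.gcd ((n:ℤ)) (a % n) = 1 := by
    unfold Nat.Coprime
    rw [Int.gcd_def]
    have h4 : (a % (n:ℤ)).natAbs = (a % (n:ℤ)).toNat := by omega
    rw [h4, Int.natAbs_natCast, Nat.gcd_comm]
  rw [h3, ← Int.isCoprime_iff_gcd_eq_one, ← Int.isCoprime_iff_gcd_eq_one, hrepr,
    IsCoprime.add_mul_left_right_iff]

/-- If `gcd(gcd(k, n), e) = 1`, then the number of integers `x` with `0 ≤ x < n` and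
`gcd(n, k·x − e) = 1` equals `φ(n)·d/φ(d)`, where `d = gcd(k, n)`. -/
theorem count_coprime_linear
    (n : ℕ) (hn : 1 ≤ n) (k e : ℤ)
    (hke : Int.gcd (Int.gcd k (n : ℤ) : ℤ) e = 1) :
    {x : ℤ | 0 ≤ x ∧ x < (n : ℤ) ∧ Int.gcd (n : ℤ) (k * x - e) = 1}.ncard
        * Nat.totient (Int.gcd k (n : ℤ))
      = Nat.totient n * Int.gcd k (n : ℤ) := by
  classical
  haveI : NeZero n := ⟨by omega⟩
  set d : ℕ := Int.gcd k (n : ℤ) with hd_def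
  have hd0 : d ≠ 0 := by
    intro h
    have h2 := Int.gcd_eq_zero_iff.mp h
    have hn0 : (n:ℤ) = 0 := h2.2
    simp at hn0; omega
  haveI : NeZero d := ⟨hd0⟩
  have hdvdZ : ((d:ℕ):ℤ) ∣ (n:ℤ) := Int.gcd_dvd_right k (n:ℤ)
  have hdvd : d ∣ n := by exact_mod_cast hdvdZ
  have hkd : ((d:ℕ):ℤ) ∣ k := Int.gcd_dvd_left k (n:ℤ)
  set m : ℕ := n / d with hm_def
  have hmd : d * m = n := Nat.mul_div_cancel' hdvd
  have hmdvd : m ∣ n := Nat.div_dvd_of_dvd hdvd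
  -- divisibility equivalence
  have hdvd_iff : ∀ v : ℤ, (n:ℤ) ∣ k * v ↔ (m:ℤ) ∣ v := by
    intro v
    obtain ⟨k', hk'⟩ := hkd
    have hgcdpos : 0 < Int.gcd k (n:ℤ) := by omega
    have hcop : IsCoprime ((m:ℕ):ℤ) k' := by
      rw [Int.isCoprime_iff_gcd_eq_one, Int.gcd_comm]
      have h1 : k / ((d:ℕ):ℤ) = k' := by
        rw [hk']; exact Int.mul_ediv_cancel_left _ (by exact_mod_cast hd0)
      have hmdZ : ((n:ℕ):ℤ) = ((d:ℕ):ℤ) * ((m:ℕ):ℤ) := by exact_mod_cast hmd.symm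
      have h2 : (n:ℤ) / ((d:ℕ):ℤ) = (m:ℤ) := by
        rw [hmdZ, Int.mul_ediv_cancel_left _ (by exact_mod_cast hd0)]
      have h5 := Int.gcd_div_gcd_div_gcd (i := k) (j := (n:ℤ)) hgcdpos
      rw [← hd_def] at h5
      rwa [h1, h2] at h5
    constructor
    · intro hv
      have h1 : (((d:ℕ):ℤ) * m) ∣ ((d:ℕ):ℤ) * (k' * v) := by
        rw [← mul_assoc, ← hk']
        have hmdZ : ((d:ℕ):ℤ) * ((m:ℕ):ℤ) = (n:ℤ) := by exact_mod_cast hmd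
        rw [hmdZ]
        exact hv
      have h2 : (m:ℤ) ∣ k' * v :=
        (mul_dvd_mul_iff_left (a := ((d:ℕ):ℤ)) (by exact_mod_cast hd0)).mp h1
      exact hcop.dvd_of_dvd_mul_left h2
    · rintro ⟨u, rfl⟩
      refine ⟨k' * u, ?_⟩
      rw [hk']
      push_cast [← hmd]
      ring
  -- the kernel count
  have hsetker : {z : ZMod n | (k : ZMod n) * z = 0}
      = ((AddSubgroup.zmultiples ((m : ℕ) : ZMod n) : AddSubgroup (ZMod n)) : Set (ZMod n)) := by
    ext z
    simp only [Set.mem_setOf_eq, SetLike.mem_coe, AddSubgroup.mem_zmultiples_iff]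
    constructor
    · intro hz
      have h1 : ((k * (z.val : ℤ) : ℤ) : ZMod n) = 0 := by
        push_cast
        rw [ZMod.natCast_val, ZMod.cast_id]
        exact hz
      have h2 : (n:ℤ) ∣ k * (z.val : ℤ) := (ZMod.intCast_zmod_eq_zero_iff_dvd _ n).mp h1
      obtain ⟨u, hu⟩ := (hdvd_iff _).mp h2
      refine ⟨u, ?_⟩
      have hzv : z = ((z.val : ℕ) : ZMod n) := by rw [ZMod.natCast_val, ZMod.cast_id]
      rw [zsmul_eq_mul, hzv,
        show ((z.val : ℕ) : ZMod n) = (((z.val : ℤ)) : ZMod n) by push_cast; rfl, hu]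
      push_cast
      ring
    · rintro ⟨c, rfl⟩
      rw [zsmul_eq_mul]
      calc (k : ZMod n) * ((c : ZMod n) * ((m:ℕ) : ZMod n))
          = (c : ZMod n) * (((k * (m:ℕ) : ℤ)) : ZMod n) := by push_cast; ring
        _ = 0 := by
            rw [(ZMod.intCast_zmod_eq_zero_iff_dvd _ n).mpr ((hdvd_iff (m:ℤ)).mpr dvd_rfl),
              mul_zero]
  have hker : (univ.filter (fun z : ZMod n => (k : ZMod n) * z = 0)).card = d := by
    have h1 : (univ.filter (fun z : ZMod n => (k : ZMod n) * z = 0)).card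
        = Nat.card {z : ZMod n | (k : ZMod n) * z = 0} := by
      rw [Nat.card_eq_fintype_card, Fintype.card_subtype]
      simp only [Set.mem_setOf_eq]
    rw [h1, hsetker, SetLike.coe_sort_coe, Nat.card_zmultiples,
      ZMod.addOrderOf_coe m (NeZero.ne n), Nat.gcd_eq_right hmdvd]
    have hm0 : m ≠ 0 := by
      rintro h
      rw [h, mul_zero] at hmd
      omega
    rw [← hmd, Nat.mul_div_cancel _ (Nat.pos_of_ne_zero hm0)]
  -- the map and target sets
  set f : ZMod n → ZMod n := fun z => (k : ZMod n) * z - (e : ZMod n) with hf_def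
  set π : ZMod n →+* ZMod d := ZMod.castHom hdvd (ZMod d) with hπ_def
  have hπk : ((k : ZMod d)) = 0 := (ZMod.intCast_zmod_eq_zero_iff_dvd k d).mpr hkd
  have hπf : ∀ z : ZMod n, π (f z) = -(e : ZMod d) := by
    intro z
    show π ((k : ZMod n) * z - (e : ZMod n)) = _
    rw [map_sub, map_mul, map_intCast, map_intCast, hπk, zero_mul, zero_sub]
  set T : Finset (ZMod n) := univ.filter (fun z : ZMod n => IsUnit (f z)) with hT_def
  set B : Finset (ZMod n) :=
    univ.filter (fun w : ZMod n => IsUnit w ∧ π w = -(e : ZMod d)) with hB_def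
  -- Step B : ncard = T.card
  have hS : {x : ℤ | 0 ≤ x ∧ x < (n : ℤ) ∧ Int.gcd (n : ℤ) (k * x - e) = 1}
      = (fun z : ZMod n => (z.val : ℤ)) '' {z : ZMod n | IsUnit (f z)} := by
    ext x
    simp only [Set.mem_setOf_eq, Set.mem_image]
    constructor
    · rintro ⟨hx0, hxn, hgcd⟩
      refine ⟨(x : ZMod n), ?_, ?_⟩
      · show IsUnit _
        have hc : ((k * x - e : ℤ) : ZMod n) = f ((x : ZMod n)) := by
          rw [hf_def]
          push_cast
          ring
        rw [← hc, aux_isUnit_intCast_iff]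
        exact hgcd
      · rw [ZMod.val_intCast, Int.emod_eq_of_lt hx0 hxn]
    · rintro ⟨z, hz, rfl⟩
      refine ⟨by positivity, by exact_mod_cast ZMod.val_lt z, ?_⟩
      have hc : ((k * (z.val : ℤ) - e : ℤ) : ZMod n) = f z := by
        rw [hf_def]
        push_cast
        rw [ZMod.natCast_val, ZMod.cast_id]
      exact (aux_isUnit_intCast_iff n _).mp (by rw [hc]; exact hz)
  have hncard : {x : ℤ | 0 ≤ x ∧ x < (n : ℤ) ∧ Int.gcd (n : ℤ) (k * x - e) = 1}.ncard
      = T.card := by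
    rw [hS, Set.ncard_image_of_injective _ (fun a b hab => ZMod.val_injective n
      (by exact_mod_cast hab)), Set.ncard_eq_toFinset_card', Set.toFinset_setOf]
  -- Step C : T.card = B.card * d
  have hmaps : ∀ z ∈ T, f z ∈ B := by
    intro z hz
    rw [hB_def, mem_filter]
    exact ⟨mem_univ _, (mem_filter.mp hz).2, hπf z⟩
  have hfiber : ∀ w ∈ B, (T.filter (fun z => f z = w)).card = d := by
    intro w hw
    obtain ⟨-, hwu, hwe⟩ := mem_filter.mp hw
    have hTfull : T.filter (fun z => f z = w) = univ.filter (fun z => f z = w) := by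
      ext z
      constructor
      · intro h
        exact mem_filter.mpr ⟨mem_univ _, (mem_filter.mp h).2⟩
      · intro h
        have hz : f z = w := (mem_filter.mp h).2
        refine mem_filter.mpr ⟨?_, hz⟩
        refine mem_filter.mpr ⟨mem_univ _, ?_⟩
        rw [hz]; exact hwu
    rw [hTfull]
    -- solvability : ∃ z₀, k * z₀ = w + e
    have hsolv : ∃ z₀ : ZMod n, (k : ZMod n) * z₀ = w + (e : ZMod n) := by
      set c : ZMod n := w + (e : ZMod n) with hc_def
      have hπc : π c = 0 := by
        rw [hc_def, map_add, hwe, map_intCast, neg_add_cancel]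
      have hπc' : ((c.val : ℕ) : ZMod d) = 0 := by
        rw [← hπc, hπ_def]
        rw [ZMod.castHom_apply, ZMod.natCast_val]
      have hdc : d ∣ c.val := (ZMod.natCast_eq_zero_iff _ _).mp hπc'
      obtain ⟨u, hu⟩ := hdc
      have hbez : ((d : ℕ) : ZMod n) = (k : ZMod n) * ((Int.gcdA k (n:ℤ) : ℤ) : ZMod n) := by
        have hb := Int.gcd_eq_gcd_ab k (n : ℤ)
        calc ((d : ℕ) : ZMod n) = ((Int.gcd k (n:ℤ) : ℤ) : ZMod n) := by
              rw [hd_def]; push_cast; rfl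
          _ = ((k * Int.gcdA k (n:ℤ) + (n:ℤ) * Int.gcdB k (n:ℤ) : ℤ) : ZMod n) := by rw [← hb]
          _ = _ := by push_cast; simp
      refine ⟨((Int.gcdA k (n:ℤ) : ℤ) : ZMod n) * ((u : ℕ) : ZMod n), ?_⟩
      rw [← mul_assoc, ← hbez]
      have hcv : ((c.val : ℕ) : ZMod n) = c := by rw [ZMod.natCast_val, ZMod.cast_id]
      rw [← hcv, hu]
      push_cast
      ring
    obtain ⟨z₀, hz₀⟩ := hsolv
    have hcf := AddMonoidHom.card_fiber_eq_of_mem_range (AddMonoidHom.mulLeft (k : ZMod n))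
      (x := w + (e : ZMod n)) (y := 0) ⟨z₀, hz₀⟩ ⟨0, mul_zero _⟩
    have hfe : univ.filter (fun z : ZMod n => f z = w)
        = univ.filter (fun z : ZMod n =>
            AddMonoidHom.mulLeft (k : ZMod n) z = w + (e : ZMod n)) := by
      apply filter_congr
      intro z _
      constructor
      · intro h
        show (k : ZMod n) * z = w + (e : ZMod n)
        have h' : (k : ZMod n) * z - (e : ZMod n) = w := h
        rw [← h']; ring
      · intro h
        show (k : ZMod n) * z - (e : ZMod n) = w
        have h' : (k : ZMod n) * z = w + (e : ZMod n) := h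
        rw [h']; ring
    have hfe0 : univ.filter (fun z : ZMod n =>
          AddMonoidHom.mulLeft (k : ZMod n) z = 0)
        = univ.filter (fun z : ZMod n => (k : ZMod n) * z = 0) := by
      apply filter_congr
      intro z _
      exact Iff.rfl
    rw [hfe]
    calc (univ.filter (fun z : ZMod n =>
            AddMonoidHom.mulLeft (k : ZMod n) z = w + (e : ZMod n))).card
        = (univ.filter (fun z : ZMod n =>
            AddMonoidHom.mulLeft (k : ZMod n) z = 0)).card := hcf
      _ = d := by rw [hfe0]; exact hker
  have hTB : T.card = B.card * d := by
    rw [card_eq_sum_card_fiberwise hmaps, sum_congr rfl hfiber, sum_const, smul_eq_mul]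
  -- Step D : totient n = totient d * B.card
  have hBtot : Nat.totient n = Nat.totient d * B.card := by
    have he : IsUnit ((e : ZMod d)) := (aux_isUnit_intCast_iff d e).mpr hke
    have hu : IsUnit (-(e : ZMod d)) := he.neg
    have hw₀ : ((hu.unit : (ZMod d)ˣ) : ZMod d) = -(e : ZMod d) := hu.unit_spec
    set F : Finset ((ZMod n)ˣ) :=
      univ.filter (fun u : (ZMod n)ˣ => ZMod.unitsMap hdvd u = hu.unit) with hF_def
    have hcoe : ∀ u : (ZMod n)ˣ, ((ZMod.unitsMap hdvd u : (ZMod d)ˣ) : ZMod d) = π (u : ZMod n) := by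
      intro u
      rw [ZMod.unitsMap_def, Units.coe_map]
      rfl
    have hBF : B.card = F.card := by
      apply Finset.card_bij (fun w hw => ((mem_filter.mp hw).2.1).unit)
      · intro w hw
        obtain ⟨-, hwu, hwe⟩ := mem_filter.mp hw
        rw [hF_def, mem_filter]
        refine ⟨mem_univ _, ?_⟩
        apply Units.ext
        rw [hcoe, IsUnit.unit_spec, hwe, hw₀]
      · intro w1 hw1 w2 hw2 hww
        have := congrArg (fun u : (ZMod n)ˣ => (u : ZMod n)) hww
        simpa [IsUnit.unit_spec] using this
      · intro u hu'
        obtain ⟨-, huF⟩ := mem_filter.mp hu'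
        refine ⟨(u : ZMod n), ?_, ?_⟩
        · rw [hB_def, mem_filter]
          refine ⟨mem_univ _, u.isUnit, ?_⟩
          rw [← hcoe, huF, hw₀]
        · apply Units.ext
          rw [IsUnit.unit_spec]
    have hfib_eq : ∀ v : (ZMod d)ˣ,
        (univ.filter (fun u : (ZMod n)ˣ => ZMod.unitsMap hdvd u = v)).card = F.card := by
      intro v
      rw [hF_def]
      exact MonoidHom.card_fiber_eq_of_mem_range (ZMod.unitsMap hdvd)
        ((ZMod.unitsMap_surjective hdvd v).imp (fun a ha => ha))
        ((ZMod.unitsMap_surjective hdvd hu.unit).imp (fun a ha => ha))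
    have hcardn : Fintype.card ((ZMod n)ˣ)
        = ∑ v ∈ (univ : Finset ((ZMod d)ˣ)),
            (univ.filter (fun u : (ZMod n)ˣ => ZMod.unitsMap hdvd u = v)).card := by
      rw [← card_univ]
      exact card_eq_sum_card_fiberwise (fun u _ => mem_univ _)
    rw [← ZMod.card_units_eq_totient n, ← ZMod.card_units_eq_totient d, hcardn,
      sum_congr rfl (fun v _ => hfib_eq v), sum_const, smul_eq_mul, card_univ, hBF]
  rw [hncard, hTB, hBtot]
  ring
end
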